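/- Let q ≥ 3 and n ≥ 3. For every w ∈ B_q(n) and every w' ∈ A_q(n) ∪ B_q(n), no nonempty proper prefix of w is equal to a suffix of w'. -/
import Mathlib


/-- Value of a letter: 1 ↦ +1, 0 ↦ -1, other letters ↦ 0. -/
def mval (a : ℕ) : ℤ := if a = 1 then 1 else if a = 0 then -1 else 0

/-- Value-sum of a word. -/
def vsum (w : List ℕ) : ℤ := (w.map mval).sum

/-- A (q-2)-colored Motzkin word over the alphabet Z_q = {0,...,q-1}:
all letters < q, every prefix has nonnegative value-sum, total value-sum 0. -/
def IsMotzkinWord (q : ℕ) (w : List ℕ) : Prop :=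
  (∀ a ∈ w, a < q) ∧ (∀ u, u <+: w → 0 ≤ vsum u) ∧ vsum w = 0

/-- The set 𝓜_{q-2}(n) of (q-2)-colored Motzkin words of length n. -/
def MotzkinSet (q n : ℕ) : Set (List ℕ) := {w | w.length = n ∧ IsMotzkinWord q w}

/-- M_{q-2}(n), the number of (q-2)-colored Motzkin words of length n. -/
noncomputable def Mnum (q n : ℕ) : ℕ := (MotzkinSet q n).ncard

/-- The set Ê_{q-2}(n) of elevated (q-2)-colored Motzkin words of length n:
words 1α0 with α ∈ 𝓜_{q-2}(n-2). -/
def ElevatedSet (q n : ℕ) : Set (List ℕ) :=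
  {w | w.length = n ∧ ∃ α ∈ MotzkinSet q (n - 2), w = 1 :: (α ++ [0])}

/-- The set A_q(n). -/
def SetA (q n : ℕ) : Set (List ℕ) :=
  {w | ∃ i ≤ n / 2, ∃ α ∈ MotzkinSet q i, ∃ β ∈ ElevatedSet q (n - i), w = α ++ β} \
    {w | ∃ α ∈ ElevatedSet q (n / 2), ∃ β ∈ ElevatedSet q (n / 2), w = α ++ β}

/-- The set B_q(n). -/
def SetB (q n : ℕ) : Set (List ℕ) :=
  {w | ∃ i ≤ n / 2 - 1, ∃ α ∈ MotzkinSet q i, ∃ β ∈ ElevatedSet q (n - i - 1),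
    w = 1 :: (α ++ β)}

/-- The set C_q(n): words γ0 with γ a (q-2)-colored Motzkin word of length n-1
having no factor which is an elevated Motzkin word of length j ≥ ⌈n/2⌉. -/
def SetC (q n : ℕ) : Set (List ℕ) :=
  {w | ∃ γ ∈ MotzkinSet q (n - 1),
    (∀ j, (n + 1) / 2 ≤ j → ∀ β ∈ ElevatedSet q j, ¬ β <:+: γ) ∧ w = γ ++ [0]}

/-- The cross-bifix-free candidate set CBFS_q(n). -/
def CBFS (q n : ℕ) : Set (List ℕ) := SetA q n ∪ SetB q n ∪ SetC q n

/-- A word is bifix-free if no nonempty proper prefix of it is also a suffix of it. -/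
def BifixFree (w : List ℕ) : Prop :=
  ∀ u, u <+: w → u ≠ [] → u.length < w.length → ¬ u <:+ w

/-- BF_q(n): the set of bifix-free words of length n over Z_q. -/
def BF (q n : ℕ) : Set (List ℕ) := {w | w.length = n ∧ (∀ a ∈ w, a < q) ∧ BifixFree w}

/-- F_{k,q}(n): the number of words of length n over Z_q avoiding k consecutive 0's. -/
noncomputable def Fcount (k q n : ℕ) : ℕ :=
  {w : List ℕ | w.length = n ∧ (∀ a ∈ w, a < q) ∧ ¬ List.replicate k 0 <:+: w}.ncard

/-- The set S_{k,q}(n) of Bajic--Stojanovic--Chee--Kiah type words: words s of length n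
over Z_q with s₁ = ⋯ = s_k = 0, s_{k+1} ≠ 0, s_n ≠ 0, and such that the subword
s_{k+2} ⋯ s_{n-1} contains no k consecutive 0's. -/
def SetS (q k n : ℕ) : Set (List ℕ) :=
  {s | s.length = n ∧ (∀ a ∈ s, a < q) ∧ s.take k = List.replicate k 0 ∧
    s.getD k 0 ≠ 0 ∧ s.getLast? ≠ some 0 ∧
    ¬ List.replicate k 0 <:+: (s.drop (k + 1)).take (n - k - 2)}


lemma vsum_append (u v : List ℕ) : vsum (u ++ v) = vsum u + vsum v := by
  simp [vsum]

/-- Balanced word with all prefix sums nonnegative. -/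
def MGood (v : List ℕ) : Prop := (∀ t, t <+: v → 0 ≤ vsum t) ∧ vsum v = 0

lemma mgood_append {a b : List ℕ} (ha : MGood a) (hb : MGood b) : MGood (a ++ b) := by
  constructor
  · intro t ht
    rcases le_or_gt t.length a.length with h | h
    · exact ha.1 t (List.prefix_of_prefix_length_le ht (a.prefix_append b) h)
    · have h2 : a <+: t := List.prefix_of_prefix_length_le (a.prefix_append b) ht h.le
      obtain ⟨s, rfl⟩ := h2
      have hs : s <+: b := (List.prefix_append_right_inj a).mp ht
      rw [vsum_append, ha.2]
      simpa using hb.1 s hs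
  · rw [vsum_append, ha.2, hb.2]; ring

lemma mgood_of_motzkin {q : ℕ} {w : List ℕ} (h : IsMotzkinWord q w) : MGood w :=
  ⟨h.2.1, h.2.2⟩

lemma mgood_elevated {q m : ℕ} {w : List ℕ} (h : w ∈ ElevatedSet q m) : MGood w := by
  obtain ⟨-, α, hα, rfl⟩ := h
  have hg : MGood α := mgood_of_motzkin hα.2
  constructor
  · intro t ht
    rcases ht with ⟨s, hs⟩
    cases t with
    | nil => simp [vsum]
    | cons a t' =>
      rw [List.cons_append] at hs
      injection hs with h1 h2
      subst h1
      have ht' : t' <+: α ++ [0] := ⟨s, h2⟩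
      have : vsum (1 :: t') = 1 + vsum t' := by simp [vsum, mval]
      rw [this]
      rcases le_or_gt t'.length α.length with h | h
      · have := hg.1 t' (List.prefix_of_prefix_length_le ht' (α.prefix_append [0]) h)
        linarith
      · have h2' : α <+: t' := List.prefix_of_prefix_length_le (α.prefix_append [0]) ht' h.le
        obtain ⟨s', rfl⟩ := h2'
        have hs' : s' <+: [0] := (List.prefix_append_right_inj α).mp ht'
        have hcase : s' = [] ∨ s' = [0] := by
          obtain ⟨r, hr⟩ := hs'
          rcases s' with - | ⟨a, rest⟩
          · left; rfl
          · right
            rcases rest with - | ⟨b, rest2⟩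
            · simp_all
            · exfalso
              have := congrArg List.length hr
              simp at this
        rw [vsum_append, hg.2]
        rcases hcase with rfl | rfl <;> simp [vsum, mval]
  · have hr : (1 :: (α ++ [0])) = ([1] ++ α) ++ [0] := by simp
    rw [hr, vsum_append, vsum_append, hg.2]
    simp [vsum, mval]

lemma vsum_suffix_nonpos {v u : List ℕ} (hv : MGood v) (hu : u <:+ v) : vsum u ≤ 0 := by
  obtain ⟨p, rfl⟩ := hu
  have h1 := hv.1 p ⟨u, rfl⟩
  have h2 := hv.2
  rw [vsum_append] at h2
  linarith

/-- For w ∈ B_q(n) and w' ∈ A_q(n) ∪ B_q(n), no nonempty proper prefix of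
w equals a suffix of w'. -/
theorem setB_vs_setAB_no_cross_bifix (q n : ℕ) (hq : 3 ≤ q) (hn : 3 ≤ n)
    (w w' : List ℕ) (hw : w ∈ SetB q n) (hw' : w' ∈ SetA q n ∪ SetB q n) :
    ∀ u, u <+: w → u ≠ [] → u.length < w.length → ¬ u <:+ w' := by
  intro u hpre hne hlen hsuf
  obtain ⟨i, hi, α, hα, β, hβ, rfl⟩ := hw
  -- length facts
  have hβlen : β.length = n - i - 1 := hβ.1
  have hαlen : α.length = i := hα.1
  have hin : i + 1 ≤ n := by
    have := Nat.div_le_self n 2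
    omega
  have hwlen : (1 :: (α ++ β)).length = n := by
    simp [hαlen, hβlen]; omega
  -- u has positive vsum
  have hgood : MGood (α ++ β) := mgood_append (mgood_of_motzkin hα.2) (mgood_elevated hβ)
  have hupos : 1 ≤ vsum u := by
    rcases u with - | ⟨a, t⟩
    · exact absurd rfl hne
    · obtain ⟨s, hs⟩ := hpre
      rw [List.cons_append] at hs
      injection hs with h1 h2
      subst h1
      have ht : t <+: α ++ β := ⟨s, h2⟩
      have := hgood.1 t ht
      have : vsum (1 :: t) = 1 + vsum t := by simp [vsum, mval]
      rw [this]
      have := hgood.1 t ht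
      linarith
  -- u has nonpositive vsum, as a suffix of w'
  have huneg : vsum u ≤ 0 := by
    rcases hw' with hA | hB
    · obtain ⟨⟨j, hj, α', hα', β', hβ', rfl⟩, -⟩ := hA
      exact vsum_suffix_nonpos (mgood_append (mgood_of_motzkin hα'.2) (mgood_elevated hβ')) hsuf
    · obtain ⟨j, hj, α', hα', β', hβ', rfl⟩ := hB
      have hjn : j + 1 ≤ n := by
        have := Nat.div_le_self n 2
        omega
      have hw'len : (1 :: (α' ++ β')).length = n := by
        have h1 : α'.length = j := hα'.1
        have h2 : β'.length = n - j - 1 := hβ'.1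
        simp [h1, h2]; omega
      obtain ⟨p, hp⟩ := hsuf
      rcases p with - | ⟨b, p'⟩
      · exfalso
        simp at hp
        rw [hp] at hlen
        rw [hwlen, hw'len] at hlen
        omega
      · rw [List.cons_append] at hp
        injection hp with h1 h2
        have : u <:+ α' ++ β' := ⟨p', h2⟩
        exact vsum_suffix_nonpos
          (mgood_append (mgood_of_motzkin hα'.2) (mgood_elevated hβ')) this
  linarith
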